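/- Let (X,d,μ) be a metric measure space with a doubling measure μ, Ω ⊂ X an open set, and w a weight on Ω. Then w ∈ WRH_∞(Ω) if and only if there exist a nondecreasing function φ : (1,∞) → (0,∞) and a constant C > 0 such that esssup over B ∩ {w > w_{2B}} of w·φ(w / w_{2B}) is at most C w_{2B}, for every ball B with 2B ⋐ Ω (trivially for balls with w(2B)=0). Moreover, if w ∈ WRH_∞(Ω), then for every nondecreasing φ : (1,∞) → (0,∞) there exists such a constant C. -/

import Mathlib

open MeasureTheory Metric Set
open scoped ENNReal

theorem wrh_fwd {X : Type*} [MetricSpace X] [MeasurableSpace X] [BorelSpace X]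
    (μ : Measure X) (Ω : Set X) (w : X → ℝ) (hw : ∀ x, 0 ≤ w x)
    (hwloc : LocallyIntegrableOn w Ω μ)
    (C : ℝ) (hC : 0 < C)
    (h : ∀ (x : X) (r : ℝ), 0 < r →
        IsCompact (closure (ball x (2 * r))) → closure (ball x (2 * r)) ⊆ Ω →
        essSup (fun y => ENNReal.ofReal (w y)) (μ.restrict (ball x r)) ≤
          ENNReal.ofReal (C * ⨍ y in ball x (2 * r), w y ∂μ))
    (φ : ℝ → ℝ) (hmono : ∀ s t : ℝ, 1 < s → s ≤ t → φ s ≤ φ t)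
    (hpos : ∀ t : ℝ, 1 < t → 0 < φ t) :
    ∃ C' : ℝ, 0 < C' ∧ ∀ (x : X) (r : ℝ), 0 < r →
      IsCompact (closure (ball x (2 * r))) → closure (ball x (2 * r)) ⊆ Ω →
      essSup (fun y => ENNReal.ofReal (w y * φ (w y / ⨍ z in ball x (2 * r), w z ∂μ)))
          (μ.restrict (ball x r ∩ {y | (⨍ z in ball x (2 * r), w z ∂μ) < w y})) ≤
        ENNReal.ofReal (C' * ⨍ z in ball x (2 * r), w z ∂μ) := by
  set M := max C 2 with hM
  refine ⟨C * max (φ M) 1, mul_pos hC (lt_of_lt_of_le one_pos (le_max_right _ _)), ?_⟩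
  intro x r hr hcpt hsub
  set A := ⨍ z in ball x (2 * r), w z ∂μ with hAdef
  have hA0 : 0 ≤ A := by
    rw [hAdef, setAverage_eq, smul_eq_mul]
    exact mul_nonneg (inv_nonneg.mpr ENNReal.toReal_nonneg)
      (integral_nonneg fun z => hw z)
  have hball : ball x r ⊆ ball x (2 * r) := ball_subset_ball (by linarith)
  have hBmeas : MeasurableSet (ball x r) := measurableSet_ball
  have hae : ∀ᵐ y ∂μ.restrict (ball x r), ENNReal.ofReal (w y) ≤ ENNReal.ofReal (C * A) := by
    filter_upwards [ENNReal.ae_le_essSup (fun y => ENNReal.ofReal (w y))] with y hy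
    exact hy.trans (h x r hr hcpt hsub)
  have hae' : ∀ᵐ y ∂μ.restrict (ball x r), w y ≤ C * A :=
    hae.mono fun y hy => (ENNReal.ofReal_le_ofReal_iff (mul_nonneg hC.le hA0)).mp hy
  rcases eq_or_lt_of_le hA0 with hAz | hApos
  · -- A = 0
    have hwz : ∀ᵐ y ∂μ.restrict (ball x r), w y = 0 := by
      filter_upwards [hae'] with y hy
      have : w y ≤ 0 := by rw [← hAz, mul_zero] at hy; exact hy
      exact le_antisymm this (hw y)
    have hnull : μ ({y | ¬ w y = 0} ∩ ball x r) = 0 := by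
      have := hwz
      rw [ae_iff, Measure.restrict_apply' hBmeas] at this
      exact this
    have hsetnull : μ (ball x r ∩ {y | A < w y}) = 0 := by
      refine measure_mono_null ?_ hnull
      intro y hy
      have h2 : A < w y := hy.2
      exact ⟨fun h0 => by rw [h0, ← hAz] at h2; exact lt_irrefl 0 h2, hy.1⟩
    have hν : μ.restrict (ball x r ∩ {y | A < w y}) = 0 := by
      apply Measure.measure_univ_eq_zero.mp
      rw [Measure.restrict_apply_univ]
      exact hsetnull
    refine essSup_le_of_ae_le _ ?_
    rw [hν, ae_zero]
    exact Filter.eventually_bot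
  · -- A > 0
    have hInt : IntegrableOn w (closure (ball x (2 * r))) μ :=
      hwloc.integrableOn_compact_subset hsub hcpt
    have ham : AEMeasurable w (μ.restrict (closure (ball x (2 * r)))) :=
      hInt.aestronglyMeasurable.aemeasurable
    have hclm : MeasurableSet (closure (ball x (2 * r))) := isClosed_closure.measurableSet
    have heq : w =ᵐ[μ.restrict (closure (ball x (2 * r)))] ham.mk w := ham.ae_eq_mk
    have heq' : ∀ᵐ y ∂μ, y ∈ closure (ball x (2 * r)) → w y = ham.mk w y :=
      (ae_restrict_iff' hclm).mp heq
    set S' : Set X := {y | A < ham.mk w y} with hS'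
    have hS'meas : MeasurableSet S' := measurableSet_lt measurable_const ham.measurable_mk
    have hsets : (ball x r ∩ {y | A < w y} : Set X) =ᵐ[μ] (ball x r ∩ S' : Set X) := by
      filter_upwards [heq'] with y hy
      have hyy : y ∈ ball x r → w y = ham.mk w y := fun hb =>
        hy (subset_closure (hball hb))
      simp only [eq_iff_iff, mem_inter_iff, mem_setOf_eq]
      constructor
      · rintro ⟨h1, h2⟩
        refine ⟨h1, ?_⟩
        show A < ham.mk w y
        rw [← hyy h1]; exact h2
      · rintro ⟨h1, h2⟩
        refine ⟨h1, ?_⟩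
        show A < w y
        have h2' : A < ham.mk w y := h2
        rw [hyy h1]; exact h2'
    rw [Measure.restrict_congr_set hsets]
    have hmeas' : MeasurableSet (ball x r ∩ S') := hBmeas.inter hS'meas
    refine essSup_le_of_ae_le _ ?_
    have hmono1 : μ.restrict (ball x r ∩ S') ≤ μ.restrict (ball x r) :=
      Measure.restrict_mono inter_subset_left le_rfl
    have hmono2 : μ.restrict (ball x r ∩ S') ≤ μ.restrict (closure (ball x (2 * r))) :=
      Measure.restrict_mono (fun y hy => subset_closure (hball hy.1)) le_rfl
    have h1 : ∀ᵐ y ∂μ.restrict (ball x r ∩ S'), w y ≤ C * A :=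
      hae'.filter_mono (ae_mono hmono1)
    have h2 : ∀ᵐ y ∂μ.restrict (ball x r ∩ S'), y ∈ ball x r ∩ S' := ae_restrict_mem hmeas'
    have h3 : ∀ᵐ y ∂μ.restrict (ball x r ∩ S'), w y = ham.mk w y :=
      heq.filter_mono (ae_mono hmono2)
    filter_upwards [h1, h2, h3] with y hy1 hy2 hy3
    have hAw : A < w y := by rw [hy3]; exact hy2.2
    have hratio : 1 < w y / A := (one_lt_div hApos).mpr hAw
    have hCM : C ≤ M := le_max_left _ _
    have hratio2 : w y / A ≤ M := by
      rw [div_le_iff₀ hApos]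
      calc w y ≤ C * A := hy1
        _ ≤ M * A := mul_le_mul_of_nonneg_right hCM hA0
    have hφle : φ (w y / A) ≤ φ M := hmono _ _ hratio hratio2
    have hφpos : 0 < φ (w y / A) := hpos _ hratio
    have key : w y * φ (w y / A) ≤ C * max (φ M) 1 * A := by
      have h4 : w y * φ (w y / A) ≤ (C * A) * φ M :=
        mul_le_mul hy1 hφle hφpos.le (mul_nonneg hC.le hA0)
      have h5 : φ M ≤ max (φ M) 1 := le_max_left _ _
      nlinarith [mul_nonneg hC.le hA0]
    exact ENNReal.ofReal_le_ofReal key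

theorem wrh_bwd {X : Type*} [MetricSpace X] [MeasurableSpace X] [BorelSpace X]
    (μ : Measure X) (Cd : ℝ)
    (hdoub : ∀ (x : X) (r : ℝ), 0 < r →
      0 < μ (ball x r) ∧ μ (ball x r) < ⊤ ∧
      μ (ball x (2 * r)) ≤ ENNReal.ofReal Cd * μ (ball x r))
    (Ω : Set X) (w : X → ℝ) (hw : ∀ x, 0 ≤ w x)
    (hwloc : LocallyIntegrableOn w Ω μ)
    (φ : ℝ → ℝ) (C : ℝ) (hmono : ∀ s t : ℝ, 1 < s → s ≤ t → φ s ≤ φ t)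
    (hpos : ∀ t : ℝ, 1 < t → 0 < φ t) (hC : 0 < C)
    (h : ∀ (x : X) (r : ℝ), 0 < r →
        IsCompact (closure (ball x (2 * r))) → closure (ball x (2 * r)) ⊆ Ω →
        essSup (fun y => ENNReal.ofReal (w y * φ (w y / ⨍ z in ball x (2 * r), w z ∂μ)))
            (μ.restrict (ball x r ∩ {y | (⨍ z in ball x (2 * r), w z ∂μ) < w y})) ≤
          ENNReal.ofReal (C * ⨍ z in ball x (2 * r), w z ∂μ)) :
    ∃ C'' : ℝ, 0 < C'' ∧ ∀ (x : X) (r : ℝ), 0 < r →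
      IsCompact (closure (ball x (2 * r))) → closure (ball x (2 * r)) ⊆ Ω →
      essSup (fun y => ENNReal.ofReal (w y)) (μ.restrict (ball x r)) ≤
        ENNReal.ofReal (C'' * ⨍ y in ball x (2 * r), w y ∂μ) := by
  have hφ2 : 0 < φ 2 := hpos 2 one_lt_two
  set M := max 2 (C / φ 2) with hMdef
  have hM2 : (2 : ℝ) ≤ M := le_max_left _ _
  refine ⟨M, lt_of_lt_of_le two_pos hM2, ?_⟩
  intro x r hr hcpt hsub
  set A := ⨍ y in ball x (2 * r), w y ∂μ with hAdef
  have hA0 : 0 ≤ A := by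
    rw [hAdef, setAverage_eq, smul_eq_mul]
    exact mul_nonneg (inv_nonneg.mpr ENNReal.toReal_nonneg)
      (integral_nonneg fun z => hw z)
  have hball : ball x r ⊆ ball x (2 * r) := ball_subset_ball (by linarith)
  have hBmeas : MeasurableSet (ball x r) := measurableSet_ball
  rcases eq_or_lt_of_le hA0 with hAz | hApos
  · -- A = 0
    have hInt2B : IntegrableOn w (ball x (2 * r)) μ :=
      (hwloc.integrableOn_compact_subset hsub hcpt).mono_set subset_closure
    have hμ2B := hdoub x (2 * r) (by linarith)
    have htr : 0 < (μ (ball x (2 * r))).toReal :=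
      ENNReal.toReal_pos hμ2B.1.ne' hμ2B.2.1.ne
    have hint0 : ∫ y in ball x (2 * r), w y ∂μ = 0 := by
      rw [hAdef, setAverage_eq, smul_eq_mul] at hAz
      rcases mul_eq_zero.mp hAz.symm with h1 | h2
      · exact absurd h1 (inv_ne_zero htr.ne')
      · exact h2
    have hwz : w =ᵐ[μ.restrict (ball x (2 * r))] 0 :=
      (integral_eq_zero_iff_of_nonneg_ae (Filter.Eventually.of_forall hw) hInt2B).mp hint0
    have hwzB : w =ᵐ[μ.restrict (ball x r)] 0 :=
      hwz.filter_mono (ae_mono (Measure.restrict_mono hball le_rfl))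
    refine essSup_le_of_ae_le _ ?_
    filter_upwards [hwzB] with y hy
    simp only [Pi.zero_apply] at hy
    rw [hy]
    simp
  · -- A > 0
    have hN := h x r hr hcpt hsub
    have hh : ∀ᵐ y ∂μ.restrict (ball x r ∩ {y | A < w y}),
        ENNReal.ofReal (w y * φ (w y / A)) ≤ ENNReal.ofReal (C * A) := by
      filter_upwards [ENNReal.ae_le_essSup
        (fun y => ENNReal.ofReal (w y * φ (w y / A)))] with y hy
      exact hy.trans hN
    rw [ae_iff] at hh
    have hN' : μ ({y | ¬ ENNReal.ofReal (w y * φ (w y / A)) ≤ ENNReal.ofReal (C * A)} ∩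
        (ball x r ∩ {y | A < w y})) = 0 :=
      le_antisymm (hh ▸ Measure.le_restrict_apply _ _) zero_le
    refine essSup_le_of_ae_le _ ?_
    rw [Filter.EventuallyLE, ae_restrict_iff' hBmeas, ae_iff]
    refine measure_mono_null ?_ hN'
    intro y hy
    simp only [mem_setOf_eq, not_forall] at hy
    obtain ⟨hyB, hyc⟩ := hy
    have hwy : M * A < w y := by
      by_contra hc
      push_neg at hc
      exact hyc (ENNReal.ofReal_le_ofReal hc)
    have hSy : A < w y := lt_of_le_of_lt (by nlinarith) hwy
    refine ⟨?_, hyB, hSy⟩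
    have hr2 : (2 : ℝ) ≤ w y / A := by
      rw [le_div_iff₀ hApos]
      nlinarith
    have hφle : φ 2 ≤ φ (w y / A) := hmono 2 _ one_lt_two hr2
    have hCMphi : C ≤ M * φ 2 := by
      have : C / φ 2 ≤ M := le_max_right _ _
      calc C = (C / φ 2) * φ 2 := by field_simp
        _ ≤ M * φ 2 := mul_le_mul_of_nonneg_right this hφ2.le
    have key : C * A < w y * φ (w y / A) := by
      have h1 : C * A ≤ M * φ 2 * A := mul_le_mul_of_nonneg_right hCMphi hA0
      have h2 : M * φ 2 * A < w y * φ 2 := by nlinarith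
      have h3 : w y * φ 2 ≤ w y * φ (w y / A) :=
        mul_le_mul_of_nonneg_left hφle (hw y)
      linarith
    intro hcon
    have := (ENNReal.ofReal_le_ofReal_iff (mul_nonneg hC.le hA0)).mp hcon
    linarith

/-- `w ∈ WRH_∞(Ω)` iff there exist a nondecreasing `φ : (1,∞) → (0,∞)` and a constant
`C > 0` with `esssup_{B ∩ {w > w_{2B}}} w·φ(w/w_{2B}) ≤ C w_{2B}` for all balls `B` with
`2B ⋐ Ω`; moreover, if `w ∈ WRH_∞(Ω)` then such a constant exists for every such `φ`. -/
theorem wrhInfty_iff_phi_esssup {X : Type*} [MetricSpace X] [MeasurableSpace X] [BorelSpace X]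
    (μ : Measure X) (Cd : ℝ) (hCd : 1 < Cd)
    (hdoub : ∀ (x : X) (r : ℝ), 0 < r →
      0 < μ (ball x r) ∧ μ (ball x r) < ⊤ ∧
      μ (ball x (2 * r)) ≤ ENNReal.ofReal Cd * μ (ball x r))
    (Ω : Set X) (hΩ : IsOpen Ω) (w : X → ℝ) (hw : ∀ x, 0 ≤ w x)
    (hwloc : LocallyIntegrableOn w Ω μ) :
    ((∃ C : ℝ, 0 < C ∧ ∀ (x : X) (r : ℝ), 0 < r →
        IsCompact (closure (ball x (2 * r))) → closure (ball x (2 * r)) ⊆ Ω →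
        essSup (fun y => ENNReal.ofReal (w y)) (μ.restrict (ball x r)) ≤
          ENNReal.ofReal (C * ⨍ y in ball x (2 * r), w y ∂μ)) ↔
      (∃ (φ : ℝ → ℝ) (C : ℝ), (∀ s t : ℝ, 1 < s → s ≤ t → φ s ≤ φ t) ∧
        (∀ t : ℝ, 1 < t → 0 < φ t) ∧ 0 < C ∧
        ∀ (x : X) (r : ℝ), 0 < r →
          IsCompact (closure (ball x (2 * r))) → closure (ball x (2 * r)) ⊆ Ω →
          essSup
              (fun y => ENNReal.ofReal
                (w y * φ (w y / ⨍ z in ball x (2 * r), w z ∂μ)))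
              (μ.restrict (ball x r ∩ {y | (⨍ z in ball x (2 * r), w z ∂μ) < w y})) ≤
            ENNReal.ofReal (C * ⨍ z in ball x (2 * r), w z ∂μ))) ∧
    ((∃ C : ℝ, 0 < C ∧ ∀ (x : X) (r : ℝ), 0 < r →
        IsCompact (closure (ball x (2 * r))) → closure (ball x (2 * r)) ⊆ Ω →
        essSup (fun y => ENNReal.ofReal (w y)) (μ.restrict (ball x r)) ≤
          ENNReal.ofReal (C * ⨍ y in ball x (2 * r), w y ∂μ)) →
      ∀ φ : ℝ → ℝ, (∀ s t : ℝ, 1 < s → s ≤ t → φ s ≤ φ t) →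
        (∀ t : ℝ, 1 < t → 0 < φ t) →
        ∃ C : ℝ, 0 < C ∧
          ∀ (x : X) (r : ℝ), 0 < r →
            IsCompact (closure (ball x (2 * r))) → closure (ball x (2 * r)) ⊆ Ω →
            essSup
                (fun y => ENNReal.ofReal
                  (w y * φ (w y / ⨍ z in ball x (2 * r), w z ∂μ)))
                (μ.restrict (ball x r ∩ {y | (⨍ z in ball x (2 * r), w z ∂μ) < w y})) ≤
              ENNReal.ofReal (C * ⨍ z in ball x (2 * r), w z ∂μ)) := by
  constructor
  · constructor
    · rintro ⟨C, hC, h⟩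
      obtain ⟨C', hC', h'⟩ := wrh_fwd μ Ω w hw hwloc C hC h (fun _ => (1 : ℝ))
        (fun _ _ _ _ => le_rfl) (fun _ _ => one_pos)
      exact ⟨fun _ => 1, C', fun _ _ _ _ => le_rfl, fun _ _ => one_pos, hC', h'⟩
    · rintro ⟨φ, C, hmono, hpos, hC, h⟩
      exact wrh_bwd μ Cd hdoub Ω w hw hwloc φ C hmono hpos hC h
  · rintro ⟨C, hC, h⟩ φ hmono hpos
    exact wrh_fwd μ Ω w hw hwloc C hC h φ hmono hpos
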